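/- arXiv:2401.08635 — 3 statements merged into one kernel-verified Lean document; each statement's English description precedes it below -/
import Mathlib

section
/- Every nonempty A ⊆ ℕ has an inverse for ⊕: defining A' = {x ∈ A : stretch(A, x) is odd} ∪ {y ∈ ℕ \ A : y > 0 and stretch(A, y−1) is odd}, one has A ⊕ A' = ∅. -/
open scoped symmDiff

def shift (A : Set ℕ) : Set ℕ := (· + 1) '' A

def kplus (A B : Set ℕ) : Set ℕ := (A ∆ B) ∆ shift (A ∩ B)

open Classical in
noncomputable def stretch (A : Set ℕ) (n : ℕ) : ℕ :=
  if n ∈ A then sSup {k | k ≤ n ∧ Set.Icc (n - k) n ⊆ A} + 1 else 0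

noncomputable def inv' (A : Set ℕ) : Set ℕ :=
  {x ∈ A | Odd (stretch A x)} ∪ {y | y ∉ A ∧ y > 0 ∧ Odd (stretch A (y - 1))}

lemma stretch_base {A : Set ℕ} {m : ℕ} (hm : m ∈ A) (h : m = 0 ∨ m - 1 ∉ A) :
    stretch A m = 1 := by
  rw [stretch, if_pos hm]
  have hset : {k | k ≤ m ∧ Set.Icc (m - k) m ⊆ A} = {0} := by
    ext k
    simp only [Set.mem_setOf_eq, Set.mem_singleton_iff]
    constructor
    · rintro ⟨hk, hIcc⟩
      by_contra hk0
      have hk1 : 1 ≤ k := Nat.one_le_iff_ne_zero.mpr hk0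
      have hm1 : 1 ≤ m := le_trans hk1 hk
      have : m - 1 ∈ Set.Icc (m - k) m := by
        constructor <;> omega
      have : m - 1 ∈ A := hIcc this
      rcases h with h | h
      · omega
      · exact h this
    · rintro rfl
      refine ⟨Nat.zero_le _, ?_⟩
      intro x hx
      simp only [Set.mem_Icc, Nat.sub_zero] at hx
      have : x = m := le_antisymm hx.2 hx.1
      rwa [this]
  rw [hset, csSup_singleton]

lemma stretch_step {A : Set ℕ} {m : ℕ} (hm : m ∈ A) (hm1 : m + 1 ∈ A) :
    stretch A (m + 1) = stretch A m + 1 := by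
  rw [stretch, if_pos hm1, stretch, if_pos hm]
  set S := {k | k ≤ m ∧ Set.Icc (m - k) m ⊆ A} with hS
  set T := {k | k ≤ m + 1 ∧ Set.Icc (m + 1 - k) (m + 1) ⊆ A} with hT
  have hS0 : 0 ∈ S := by
    refine ⟨Nat.zero_le _, ?_⟩
    intro x hx
    simp only [Set.mem_Icc, Nat.sub_zero] at hx
    have : x = m := le_antisymm hx.2 hx.1
    rwa [this]
  have hT0 : 0 ∈ T := by
    refine ⟨Nat.zero_le _, ?_⟩
    intro x hx
    simp only [Set.mem_Icc, Nat.sub_zero] at hx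
    have : x = m + 1 := le_antisymm hx.2 hx.1
    rwa [this]
  have hSbdd : BddAbove S := ⟨m, fun k hk => hk.1⟩
  have hTbdd : BddAbove T := ⟨m + 1, fun k hk => hk.1⟩
  have hSmem : sSup S ∈ S := Nat.sSup_mem ⟨0, hS0⟩ hSbdd
  have hTmem : sSup T ∈ T := Nat.sSup_mem ⟨0, hT0⟩ hTbdd
  have hSle : sSup S ≤ m := hSmem.1
  have hTle : sSup T ≤ m + 1 := hTmem.1
  have hle1 : sSup S + 1 ≤ sSup T := by
    apply le_csSup hTbdd
    refine ⟨by omega, ?_⟩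
    intro x hx
    simp only [Set.mem_Icc] at hx
    rcases Nat.lt_or_ge x (m + 1) with hx' | hx'
    · apply hSmem.2
      simp only [Set.mem_Icc]
      omega
    · have : x = m + 1 := by omega
      rwa [this]
  have hle2 : sSup T ≤ sSup S + 1 := by
    have hpos : 1 ≤ sSup T := by omega
    have : sSup T - 1 ∈ S := by
      refine ⟨by omega, ?_⟩
      intro x hx
      simp only [Set.mem_Icc] at hx
      apply hTmem.2
      simp only [Set.mem_Icc]
      omega
    have := le_csSup hSbdd this
    omega
  omega

lemma stretch_pos {A : Set ℕ} {m : ℕ} (hm : m ∈ A) : 0 < stretch A m := by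
  rw [stretch, if_pos hm]; omega

lemma mem_of_stretch_pos {A : Set ℕ} {m : ℕ} (h : 0 < stretch A m) : m ∈ A := by
  by_contra hm
  rw [stretch, if_neg hm] at h
  omega

theorem stmt12 : ∀ A : Set ℕ, A.Nonempty → kplus A (inv' A) = ∅ := by
  intro A hA
  have key : A ∆ inv' A = shift (A ∩ inv' A) := by
    ext n
    simp only [Set.mem_symmDiff, shift, Set.mem_image, Set.mem_inter_iff, inv',
      Set.mem_union, Set.mem_setOf_eq]
    constructor
    · rintro (⟨hnA, hnB⟩ | ⟨hnB, hnA⟩)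
      · -- n ∈ A, n ∉ inv' A, so ¬ Odd (stretch A n)
        have hodd : ¬ Odd (stretch A n) := fun h => hnB (Or.inl ⟨hnA, h⟩)
        have heven : Even (stretch A n) := Nat.not_odd_iff_even.mp hodd
        -- must have n ≥ 1 and n - 1 ∈ A
        have hn1 : ¬ (n = 0 ∨ n - 1 ∉ A) := by
          intro h
          have := stretch_base hnA h
          rw [this] at heven
          simp at heven
        push_neg at hn1
        obtain ⟨hn0, hn1A⟩ := hn1
        have hstep : stretch A n = stretch A (n - 1) + 1 := by
          have := stretch_step hn1A (by rwa [Nat.sub_add_cancel (by omega)])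
          rwa [Nat.sub_add_cancel (by omega)] at this
        have hodd1 : Odd (stretch A (n - 1)) := by
          rw [hstep] at heven
          rcases Nat.even_or_odd (stretch A (n - 1)) with h | h
          · exfalso
            have := Even.add_one h
            exact (Nat.not_odd_iff_even.mpr heven) this
          · exact h
        exact ⟨n - 1, ⟨hn1A, Or.inl ⟨hn1A, hodd1⟩⟩, by omega⟩
      · -- n ∉ A, n ∈ inv' A
        rcases hnB with ⟨hnA', _⟩ | ⟨_, hn0, hodd⟩
        · exact absurd hnA' hnA
        · have hn1A : n - 1 ∈ A := mem_of_stretch_pos (by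
            rcases hodd with ⟨k, hk⟩; omega)
          exact ⟨n - 1, ⟨hn1A, Or.inl ⟨hn1A, hodd⟩⟩, by omega⟩
    · rintro ⟨m, ⟨hmA, hmB⟩, rfl⟩
      have hodd : Odd (stretch A m) := by
        rcases hmB with ⟨_, h⟩ | ⟨h, _⟩
        · exact h
        · exact absurd hmA h
      by_cases hA1 : m + 1 ∈ A
      · left
        refine ⟨hA1, ?_⟩
        rintro (⟨_, hodd1⟩ | ⟨h, _⟩)
        · rw [stretch_step hmA hA1] at hodd1
          exact (Nat.not_odd_iff_even.mpr (Odd.add_one hodd)) hodd1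
        · exact h hA1
      · right
        refine ⟨Or.inr ⟨hA1, by omega, by simpa using hodd⟩, hA1⟩
  rw [kplus, key, symmDiff_self]
  rfl
end

section
/- For every A ⊆ ℕ there exists A' ⊆ ℕ such that A ⊕ A' = ∅. -/
open scoped symmDiff

def myf (A : Set ℕ) : ℕ → Prop
  | 0 => 0 ∈ A
  | n+1 => ((n+1 ∈ A) ↔ ¬ (n ∈ A ∧ myf A n))

theorem stmt13 : ∀ A : Set ℕ, ∃ A' : Set ℕ, kplus A A' = ∅ := by
  intro A
  refine ⟨{n | myf A n}, ?_⟩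
  ext n
  simp only [kplus, Set.mem_empty_iff_false, iff_false, Set.mem_symmDiff, shift,
    Set.mem_image, Set.mem_inter_iff, Set.mem_setOf_eq]
  match n with
  | 0 =>
    simp only [myf]
    rintro (⟨⟨h1, h2⟩ | ⟨h1, h2⟩, _⟩ | ⟨⟨x, _, hx⟩, _⟩)
    · exact h2 h1
    · exact h2 h1
    · omega
  | n+1 =>
    simp only [myf]
    rintro (⟨h1, h2⟩ | ⟨⟨x, hx, hxe⟩, h2⟩)
    · refine h2 ⟨n, ?_, rfl⟩
      tauto
    · obtain rfl : x = n := by omega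
      tauto
end

section
/- Let A ⊆ ℕ be nonempty and A' = {x ∈ A : stretch(A, x) odd} ∪ {y ∉ A : y > 0 and stretch(A, y−1) odd}. If x ∈ A \ A', then x ≥ 1, x − 1 ∈ A ∩ A', and hence x ∈ (A ∩ A') + 1. -/
open scoped symmDiff

theorem stmt14 : ∀ A : Set ℕ, A.Nonempty → ∀ x ∈ A \ inv' A,
    1 ≤ x ∧ x - 1 ∈ A ∩ inv' A ∧ x ∈ shift (A ∩ inv' A) := by
  intro A _ x hx
  obtain ⟨hxA, hxI⟩ := hx
  have hnotodd : ¬ Odd (stretch A x) := fun h => hxI (Or.inl ⟨hxA, h⟩)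
  set S : Set ℕ := {k | k ≤ x ∧ Set.Icc (x - k) x ⊆ A} with hS
  have h0S : 0 ∈ S := ⟨Nat.zero_le x, by simp [hxA]⟩
  have hbdd : BddAbove S := ⟨x, fun k hk => hk.1⟩
  have hsmem : sSup S ∈ S := Nat.sSup_mem ⟨0, h0S⟩ hbdd
  set s := sSup S with hsdef
  have hstx : stretch A x = s + 1 := if_pos hxA
  have hsodd : Odd s := by
    rcases Nat.even_or_odd s with he | ho
    · exact absurd (by rw [hstx]; exact Even.add_one he) hnotodd
    · exact ho
  have hs1 : 1 ≤ s := hsodd.pos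
  have hsx : s ≤ x := hsmem.1
  have hx1 : 1 ≤ x := le_trans hs1 hsx
  have hx1A : x - 1 ∈ A := hsmem.2 (Set.mem_Icc.mpr ⟨by omega, by omega⟩)
  -- compute stretch A (x-1)
  set S' : Set ℕ := {k | k ≤ x - 1 ∧ Set.Icc (x - 1 - k) (x - 1) ⊆ A} with hS'
  have hmem' : s - 1 ∈ S' := by
    refine ⟨by omega, fun m hm => ?_⟩
    rw [Set.mem_Icc] at hm
    exact hsmem.2 (Set.mem_Icc.mpr ⟨by omega, by omega⟩)
  have hbdd' : BddAbove S' := ⟨x - 1, fun k hk => hk.1⟩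
  have hsmem' : sSup S' ∈ S' := Nat.sSup_mem ⟨s - 1, hmem'⟩ hbdd'
  set s' := sSup S' with hs'def
  have hle : s' + 1 ∈ S := by
    refine ⟨by have := hsmem'.1; omega, fun m hm => ?_⟩
    rw [Set.mem_Icc] at hm
    rcases eq_or_lt_of_le hm.2 with h | h
    · exact h ▸ hxA
    · exact hsmem'.2 (Set.mem_Icc.mpr ⟨by omega, by omega⟩)
  have h1 : s' + 1 ≤ s := le_csSup hbdd hle
  have h2 : s - 1 ≤ s' := le_csSup hbdd' hmem'
  have hseq : s' = s - 1 := by omega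
  have hstx1 : stretch A (x - 1) = s := by
    rw [stretch, if_pos hx1A]
    show s' + 1 = s
    omega
  have hmemI : x - 1 ∈ inv' A := Or.inl ⟨hx1A, hstx1 ▸ hsodd⟩
  exact ⟨hx1, ⟨hx1A, hmemI⟩, ⟨x - 1, ⟨hx1A, hmemI⟩, by simp; omega⟩⟩
end
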